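/- Let F : ℂⁿ → ℂ be real-differentiable at a point z. Then the normal space to the fibre of F at z, i.e. the orthogonal complement with respect to the real inner product ⟨v,w⟩_ℝ = Re Σ_k v_k·conj(w_k) of the kernel of fderiv ℝ F z in ℂⁿ, equals the set {μ·conj(∂F(z)) + conj(μ)·∂̄F(z) : μ ∈ ℂ}, where ∂F(z) and ∂̄F(z) are the Wirtinger gradient vectors of F at z. (Lemma 2.1.) -/

import Mathlib

open Complex Filter Function Metric

noncomputable section

/-- `ℂⁿ` with its Euclidean (Hermitian) norm. -/
abbrev Cn (n : ℕ) := EuclideanSpace ℂ (Fin n)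

/-- Real inner product `⟨v,w⟩_ℝ = Re Σ_k v_k·conj(w_k)` on `ℂⁿ ≅ ℝ^{2n}`. -/
def realInnerC {n : ℕ} (v w : Cn n) : ℝ := (∑ k : Fin n, v k * (starRingEnd ℂ) (w k)).re

/-- Componentwise complex conjugate of a vector in `ℂⁿ`. -/
def conjVec {n : ℕ} (v : Cn n) : Cn n := WithLp.toLp 2 (fun k => starRingEnd ℂ (v k))

/-- The Wirtinger gradient `∂F(z)`, with components
`∂F/∂z_k(z) = ½(L(e_k) − i·L(i·e_k))` where `L = fderiv ℝ F z`. -/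
def wirtD {n : ℕ} (F : Cn n → ℂ) (z : Cn n) : Cn n :=
  WithLp.toLp 2 (fun k => (1 / 2 : ℂ) * (fderiv ℝ F z (EuclideanSpace.single k 1)
    - Complex.I * fderiv ℝ F z (EuclideanSpace.single k Complex.I)))

/-- The Wirtinger gradient `∂̄F(z)`, with components
`∂F/∂z̄_k(z) = ½(L(e_k) + i·L(i·e_k))` where `L = fderiv ℝ F z`. -/
def wirtDBar {n : ℕ} (F : Cn n → ℂ) (z : Cn n) : Cn n :=
  WithLp.toLp 2 (fun k => (1 / 2 : ℂ) * (fderiv ℝ F z (EuclideanSpace.single k 1)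
    + Complex.I * fderiv ℝ F z (EuclideanSpace.single k Complex.I)))

-- factorization lemma
lemma factor_through {K V W U : Type*} [Field K] [AddCommGroup V] [Module K V]
    [AddCommGroup W] [Module K W] [AddCommGroup U] [Module K U]
    (f : V →ₗ[K] W) (g : V →ₗ[K] U) (h : LinearMap.ker f ≤ LinearMap.ker g) :
    ∃ ψ : W →ₗ[K] U, ∀ v, g v = ψ (f v) := by
  obtain ⟨ψ, hψ⟩ := LinearMap.exists_extend
    ((LinearMap.ker f).liftQ g h ∘ₗ f.quotKerEquivRange.symm.toLinearMap)
  refine ⟨ψ, fun v => ?_⟩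
  have h1 : f v ∈ LinearMap.range f := ⟨v, rfl⟩
  have := congrArg (fun m => m ⟨f v, h1⟩) hψ
  simp only [LinearMap.comp_apply, Submodule.subtype_apply, LinearEquiv.coe_coe] at this
  rw [this, LinearMap.quotKerEquivRange_symm_apply_image]
  simp

-- L u = ∑ a_k u_k + b_k conj u_k
lemma fderiv_eq_wirt {n : ℕ} (F : Cn n → ℂ) (z : Cn n) (u : Cn n) :
    fderiv ℝ F z u = ∑ k : Fin n, (wirtD F z k * u k + wirtDBar F z k * (starRingEnd ℂ) (u k)) := by
  set L := fderiv ℝ F z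
  have hu : u = ∑ k : Fin n, EuclideanSpace.single k (u k) := by
    ext j
    rw [show ((∑ k : Fin n, EuclideanSpace.single k (u k)) j)
        = ∑ k : Fin n, (EuclideanSpace.single k (u k) : Cn n) j from
      by rw [WithLp.ofLp_sum, Finset.sum_apply]]
    simp [EuclideanSpace.single_apply]
  have : L u = ∑ k : Fin n, L (EuclideanSpace.single k (u k)) := by
    conv_lhs => rw [hu]
    exact map_sum L _ _
  rw [this]
  refine Finset.sum_congr rfl fun k _ => ?_
  have hsingle : EuclideanSpace.single k (u k)
      = (u k).re • EuclideanSpace.single k (1 : ℂ)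
        + (u k).im • EuclideanSpace.single k (Complex.I) := by
    ext j
    by_cases h : j = k <;> simp [EuclideanSpace.single_apply, h, Complex.ext_iff]
  rw [hsingle, map_add, map_smul, map_smul]
  simp only [wirtD, wirtDBar, PiLp.toLp_apply]
  set A := L (EuclideanSpace.single k (1:ℂ))
  set B := L (EuclideanSpace.single k Complex.I)
  rw [show (starRingEnd ℂ) (u k) = (u k).re - (u k).im * Complex.I by
    simp [Complex.ext_iff]]
  rw [show (u k : ℂ) = (u k).re + (u k).im * Complex.I from (Complex.re_add_im _).symm]
  simp only [Complex.real_smul]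
  ring_nf
  simp [Complex.I_sq]
  ring

lemma realInnerC_mu {n : ℕ} (F : Cn n → ℂ) (z : Cn n) (μ : ℂ) (u : Cn n) :
    realInnerC (μ • conjVec (wirtD F z) + (starRingEnd ℂ μ) • wirtDBar F z) u
      = ((starRingEnd ℂ μ) * fderiv ℝ F z u).re := by
  rw [fderiv_eq_wirt, Finset.mul_sum, Complex.re_sum, realInnerC, Complex.re_sum]
  refine Finset.sum_congr rfl fun k _ => ?_
  simp only [PiLp.add_apply, PiLp.smul_apply, conjVec, PiLp.toLp_apply, smul_eq_mul]
  simp only [Complex.mul_re, Complex.mul_im, Complex.add_re, Complex.add_im,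
    Complex.conj_re, Complex.conj_im]
  ring

lemma realInnerC_eq_zero {n : ℕ} {v : Cn n} (h : ∀ u, realInnerC v u = 0) : v = 0 := by
  have h2 := h v
  rw [realInnerC, Complex.re_sum] at h2
  have h3 : ∀ k : Fin n, (v k * (starRingEnd ℂ) (v k)).re = Complex.normSq (v k) := by
    intro k; rw [Complex.mul_conj]; simp
  rw [Finset.sum_congr rfl (fun k _ => h3 k)] at h2
  have h4 : ∀ k ∈ Finset.univ, (0:ℝ) ≤ Complex.normSq (v k) := fun k _ => Complex.normSq_nonneg _
  have h5 := (Finset.sum_eq_zero_iff_of_nonneg h4).mp h2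
  ext k
  simpa using Complex.normSq_eq_zero.mp (h5 k (Finset.mem_univ k))

lemma realInnerC_sub_left {n : ℕ} (v w u : Cn n) :
    realInnerC (v - w) u = realInnerC v u - realInnerC w u := by
  simp only [realInnerC, ← Complex.sub_re, ← Finset.sum_sub_distrib]
  congr 1
  refine Finset.sum_congr rfl fun k _ => ?_
  simp [sub_mul]

/-- **Lemma 2.1.**  For `F : ℂⁿ → ℂ` real-differentiable at `z`, the normal space to the
fibre of `F` at `z` — the orthogonal complement, for the real inner product, of the kernel
of `fderiv ℝ F z` — equals the set of vectors
`n_μ = μ·conj(∂F(z)) + conj(μ)·∂̄F(z)`, `μ ∈ ℂ`. -/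
theorem normal_space_eq_wirtinger_span
    {n : ℕ} (F : Cn n → ℂ) (z : Cn n) (hF : DifferentiableAt ℝ F z) :
    {v : Cn n | ∀ u : Cn n, fderiv ℝ F z u = 0 → realInnerC v u = 0}
      = {v : Cn n | ∃ μ : ℂ,
          v = μ • conjVec (wirtD F z) + (starRingEnd ℂ μ) • wirtDBar F z} := by
  ext v
  simp only [Set.mem_setOf_eq]
  constructor
  · intro hv
    set L : Cn n →ₗ[ℝ] ℂ := (fderiv ℝ F z : Cn n →L[ℝ] ℂ).toLinearMap with hL
    have hφadd : ∀ x y : Cn n, realInnerC v (x + y) = realInnerC v x + realInnerC v y := by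
      intro x y
      simp only [realInnerC, ← Complex.add_re, ← Finset.sum_add_distrib]
      congr 1
      refine Finset.sum_congr rfl fun k _ => ?_
      simp [mul_add]
    have hφsmul : ∀ (r : ℝ) (x : Cn n), realInnerC v (r • x) = r * realInnerC v x := by
      intro r x
      simp only [realInnerC, Finset.mul_sum, ← Complex.re_sum]
      rw [← Complex.re_ofReal_mul, Finset.mul_sum]
      congr 1
      refine Finset.sum_congr rfl fun k _ => ?_
      simp only [PiLp.smul_apply, Complex.real_smul, map_mul, Complex.conj_ofReal]
      ring
    set φ : Cn n →ₗ[ℝ] ℝ :=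
      { toFun := fun u => realInnerC v u
        map_add' := hφadd
        map_smul' := hφsmul } with hφ
    have hker : LinearMap.ker L ≤ LinearMap.ker φ := by
      intro u hu
      simp only [LinearMap.mem_ker] at hu ⊢
      exact hv u hu
    obtain ⟨ψ, hψ⟩ := factor_through L φ hker
    set μ : ℂ := (ψ 1 : ℝ) + (ψ Complex.I : ℝ) * Complex.I with hμ
    have hψc : ∀ c : ℂ, ψ c = ((starRingEnd ℂ) μ * c).re := by
      intro c
      have hc : c = (c.re : ℝ) • (1:ℂ) + (c.im : ℝ) • Complex.I := by
        simp [Complex.real_smul]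
      rw [hc, map_add, map_smul, map_smul]
      simp only [smul_eq_mul, hμ]
      simp [Complex.mul_re, Complex.mul_im, Complex.add_re, Complex.add_im]
      ring
    refine ⟨μ, ?_⟩
    have key : ∀ u, realInnerC
        (v - (μ • conjVec (wirtD F z) + (starRingEnd ℂ μ) • wirtDBar F z)) u = 0 := by
      intro u
      rw [realInnerC_sub_left, realInnerC_mu]
      have : realInnerC v u = ψ (L u) := hψ u
      rw [this, ← hψc]
      simp [hL]
    have := realInnerC_eq_zero key
    rw [sub_eq_zero] at this
    exact this
  · rintro ⟨μ, rfl⟩ u hu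
    rw [realInnerC_mu, hu, mul_zero, Complex.zero_re]
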